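/- Let v be a cancelable valuation function and let X = {x_1, …, x_k} and Y = {y_1, …, y_k} be two sets of goods of equal cardinality k (with all x_j distinct and all y_j distinct). If v({x_j}) ≥ v({y_j}) for every j ∈ [k], then v(X) ≥ v(Y). -/
import Mathlib


/-- A valuation `v` on subsets of the goods is *cancelable* if
`v (S ∪ {g}) > v (T ∪ {g})` implies `v S > v T` for every `g ∉ S ∪ T`. -/
def Cancelable {G : Type*} [DecidableEq G] (v : Finset G → ℝ) : Prop :=
  ∀ S T : Finset G, ∀ g, g ∉ S ∪ T → v (insert g S) > v (insert g T) → v S > v T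

private lemma lemA {G : Type*} [DecidableEq G] {v : Finset G → ℝ} (hc : Cancelable v)
    (C : Finset G) : ∀ a b, a ∉ C → b ∉ C →
    v (insert b C) > v (insert a C) → v {b} > v {a} := by
  induction C using Finset.induction_on with
  | empty => intro a b _ _ h; simpa using h
  | @insert c S hcS ih =>
    intro a b ha hb hgt
    simp only [Finset.mem_insert, not_or] at ha hb
    rw [Finset.insert_comm b c, Finset.insert_comm a c] at hgt
    refine ih a b ha.2 hb.2 (hc _ _ c ?_ hgt)
    simp only [Finset.mem_union, Finset.mem_insert, not_or]
    exact ⟨⟨fun h => hb.1 h.symm, hcS⟩, ⟨fun h => ha.1 h.symm, hcS⟩⟩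

private lemma lemA' {G : Type*} [DecidableEq G] {v : Finset G → ℝ} (hc : Cancelable v)
    {C : Finset G} {a b : G} (ha : a ∉ C) (hb : b ∉ C) (hab : v {b} ≥ v {a}) :
    v (insert b C) ≥ v (insert a C) := by
  by_contra hlt
  exact absurd (lemA hc C b a hb ha (lt_of_not_ge hlt)) (not_lt.2 hab)

private lemma mainAux {G : Type*} [DecidableEq G] {v : Finset G → ℝ} (hc : Cancelable v) :
    ∀ (n : ℕ) {k : ℕ} (x y : Fin k → G), Function.Injective x → Function.Injective y →
    (∀ j : Fin k, v {x j} ≥ v {y j}) →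
    (Finset.univ.filter fun j => x j ≠ y j).card ≤ n →
    v (Finset.univ.image x) ≥ v (Finset.univ.image y) := by
  intro n
  induction n with
  | zero =>
    intro k x y hx hy h hcard
    have : ∀ j, x j = y j := by
      intro j
      by_contra hj
      have : j ∈ Finset.univ.filter fun j => x j ≠ y j := by simp [hj]
      have := Finset.card_pos.2 ⟨j, this⟩
      omega
    have hxy : x = y := funext this
    rw [hxy]
  | succ n ih =>
    intro k x y hx hy h hcard
    by_cases hex : ∃ j, x j ≠ y j ∧ x j ∉ Finset.univ.image y
    · obtain ⟨j, hne, hnotin⟩ := hex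
      set z : Fin k → G := Function.update y j (x j) with hz
      have hzj : z j = x j := Function.update_self j (x j) y
      have hzi : ∀ i, i ≠ j → z i = y i := fun i hij => Function.update_of_ne hij _ _
      have hzinj : Function.Injective z := by
        intro a b hab
        by_cases haj : a = j <;> by_cases hbj : b = j
        · rw [haj, hbj]
        · exfalso; rw [haj, hzj, hzi b hbj] at hab
          exact hnotin (Finset.mem_image.2 ⟨b, Finset.mem_univ b, hab.symm⟩)
        · exfalso; rw [hbj, hzj, hzi a haj] at hab
          exact hnotin (Finset.mem_image.2 ⟨a, Finset.mem_univ a, hab⟩)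
        · rw [hzi a haj, hzi b hbj] at hab; exact hy hab
      have hdom : ∀ i, v {x i} ≥ v {z i} := by
        intro i
        by_cases hij : i = j
        · rw [hij, hzj]
        · rw [hzi i hij]; exact h i
      have hsub : (Finset.univ.filter fun i => x i ≠ z i) ⊆
          (Finset.univ.filter fun i => x i ≠ y i).erase j := by
        intro i hi
        simp only [Finset.mem_filter, Finset.mem_univ, true_and] at hi
        have hij : i ≠ j := by
          intro hij; rw [hij, hzj] at hi; exact hi rfl
        rw [hzi i hij] at hi
        simp [Finset.mem_erase, hij, hi]
      have hjmem : j ∈ Finset.univ.filter fun i => x i ≠ y i := by simp [hne]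
      have hcard' : (Finset.univ.filter fun i => x i ≠ z i).card ≤ n := by
        have h1 := Finset.card_le_card hsub
        have h2 := Finset.card_erase_of_mem hjmem
        have h3 := Finset.card_pos.2 ⟨j, hjmem⟩
        omega
      have step1 : v (Finset.univ.image x) ≥ v (Finset.univ.image z) :=
        ih x z hx hzinj hdom hcard'
      -- Now show v (image z) ≥ v (image y) via lemA'
      have him : (Finset.univ.erase j).image z = (Finset.univ.erase j).image y := by
        apply Finset.image_congr
        intro i hi
        exact hzi i (Finset.ne_of_mem_erase hi)
      have hCz : Finset.univ.image z = insert (x j) ((Finset.univ.erase j).image y) := by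
        conv_lhs => rw [show (Finset.univ : Finset (Fin k)) = insert j (Finset.univ.erase j) by
          rw [Finset.insert_erase (Finset.mem_univ j)]]
        rw [Finset.image_insert, hzj, him]
      have hCy : Finset.univ.image y = insert (y j) ((Finset.univ.erase j).image y) := by
        conv_lhs => rw [show (Finset.univ : Finset (Fin k)) = insert j (Finset.univ.erase j) by
          rw [Finset.insert_erase (Finset.mem_univ j)]]
        rw [Finset.image_insert]
      have hyjC : y j ∉ (Finset.univ.erase j).image y := by
        intro hmem
        obtain ⟨i, hi, hiy⟩ := Finset.mem_image.1 hmem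
        exact (Finset.ne_of_mem_erase hi) (hy hiy)
      have hxjC : x j ∉ (Finset.univ.erase j).image y := by
        intro hmem
        obtain ⟨i, hi, hiy⟩ := Finset.mem_image.1 hmem
        exact hnotin (Finset.mem_image.2 ⟨i, Finset.mem_univ i, hiy⟩)
      have step2 : v (Finset.univ.image z) ≥ v (Finset.univ.image y) := by
        rw [hCz, hCy]
        exact lemA' hc hyjC hxjC (h j)
      exact le_trans step2 step1
    · push_neg at hex
      have hsub : Finset.univ.image x ⊆ Finset.univ.image y := by
        intro g hg
        obtain ⟨j, _, hj⟩ := Finset.mem_image.1 hg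
        by_cases hje : x j = y j
        · exact hj ▸ hje ▸ Finset.mem_image.2 ⟨j, Finset.mem_univ j, rfl⟩
        · exact hj ▸ hex j hje
      have heq : Finset.univ.image x = Finset.univ.image y := by
        apply Finset.eq_of_subset_of_card_le hsub
        rw [Finset.card_image_of_injective _ hy, Finset.card_image_of_injective _ hx]
      rw [heq]

theorem cancelable_pointwise_domination {G : Type*} [DecidableEq G] (v : Finset G → ℝ)
    (hnn : ∀ S, 0 ≤ v S) (hc : Cancelable v)
    {k : ℕ} (x y : Fin k → G)
    (hx : Function.Injective x) (hy : Function.Injective y)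
    (h : ∀ j : Fin k, v {x j} ≥ v {y j}) :
    v (Finset.univ.image x) ≥ v (Finset.univ.image y) := by
  exact mainAux hc _ x y hx hy h le_rfl
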